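/- arXiv:1410.2280 — 5 statements merged into one kernel-verified Lean document; each statement's English description precedes it below -/
import Mathlib

section
/- If f : M × M → N is a bilinear map of abelian groups and M is divisible, then the two-sided kernel C(f) = {x ∈ M : f(x,z) = 0 = f(z,x) for all z ∈ M} is a divisible subgroup of M. -/
/-- If `M` is divisible then the two-sided kernel of a bilinear map `f : M × M → N`
is a divisible subgroup of `M`. -/
theorem stmt_1 {M N : Type*} [AddCommGroup M] [AddCommGroup N]
    (f : M →+ M →+ N)
    (hdiv : ∀ (a : M) (m : ℕ), 0 < m → ∃ a' : M, m • a' = a)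
    (x : M) (hx : ∀ z : M, f x z = 0 ∧ f z x = 0) (m : ℕ) (hm : 0 < m) :
    ∃ x' : M, m • x' = x ∧ ∀ z : M, f x' z = 0 ∧ f z x' = 0 := by
  obtain ⟨x', hx'⟩ := hdiv x m hm
  refine ⟨x', hx', fun z => ?_⟩
  obtain ⟨z', hz'⟩ := hdiv z m hm
  constructor
  · have : f x' z = f x z' := by
      simp [← hz', ← hx', map_nsmul]
    rw [this, (hx z').1]
  · have : f z x' = f z' x := by
      simp [← hz', ← hx', map_nsmul]
    rw [this, (hx z').2]
end

section
/- Let R be a nonassociative ring whose additive group is divisible. Then Ann(R) ∩ R² is a divisible subgroup of R, where R² is the additive subgroup generated by all products x·y. -/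
/-- In a nonassociative ring with divisible additive group, `Ann(R) ∩ R²` is a
divisible subgroup. -/
theorem stmt_10 {R : Type*} [NonUnitalNonAssocRing R]
    (hdiv : ∀ (a : R) (m : ℕ), 0 < m → ∃ a' : R, m • a' = a) :
    let Ann : Set R := {x | ∀ y : R, x * y = 0 ∧ y * x = 0}
    let Sq : AddSubgroup R := AddSubgroup.closure {z : R | ∃ x y : R, z = x * y}
    ∀ z ∈ Ann ∩ (Sq : Set R), ∀ m : ℕ, 0 < m →
      ∃ z' ∈ Ann ∩ (Sq : Set R), m • z' = z := by
  intro Ann Sq z hz m hm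
  obtain ⟨hzA, hzS⟩ := hz
  have key : ∃ w ∈ Sq, m • w = z := by
    clear hzA
    induction hzS using AddSubgroup.closure_induction with
    | mem x hx =>
      obtain ⟨a, b, rfl⟩ := hx
      obtain ⟨a', ha'⟩ := hdiv a m hm
      exact ⟨a' * b, AddSubgroup.subset_closure ⟨a', b, rfl⟩, by rw [← ha', smul_mul_assoc]⟩
    | zero => exact ⟨0, Sq.zero_mem, smul_zero m⟩
    | add x y hx hy ihx ihy =>
      obtain ⟨w₁, hw₁, hw₁'⟩ := ihx
      obtain ⟨w₂, hw₂, hw₂'⟩ := ihy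
      exact ⟨w₁ + w₂, Sq.add_mem hw₁ hw₂, by rw [smul_add, hw₁', hw₂']⟩
    | neg x hx ihx =>
      obtain ⟨w, hw, hw'⟩ := ihx
      exact ⟨-w, Sq.neg_mem hw, by rw [smul_neg, hw']⟩
  obtain ⟨w, hwS, hw⟩ := key
  refine ⟨w, ⟨fun y => ?_, hwS⟩, hw⟩
  obtain ⟨y', hy'⟩ := hdiv y m hm
  constructor
  · rw [← hy', mul_smul_comm, ← smul_mul_assoc, hw, (hzA y').1]
  · rw [← hy', smul_mul_assoc, ← mul_smul_comm, hw, (hzA y').2]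
end

section
/- Let R be a nonassociative ring whose additive group is divisible, and let R₀ be a subgroup of Ann(R) such that Ann(R) = R₀ ⊕ (Ann(R) ∩ R²). If R² is torsion-free, then R₀ is a divisible subgroup. -/
/-- In a nonassociative ring with divisible additive group, if `R₀` is a direct
complement of `Ann(R) ∩ R²` in `Ann(R)` and `R²` is torsion-free, then `R₀` is
divisible. -/
theorem stmt_12 {R : Type*} [NonUnitalNonAssocRing R]
    (hdiv : ∀ (a : R) (m : ℕ), 0 < m → ∃ a' : R, m • a' = a)
    (Ann : AddSubgroup R)
    (hAnn : ∀ x : R, x ∈ Ann ↔ ∀ y : R, x * y = 0 ∧ y * x = 0)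
    (Sq : AddSubgroup R)
    (hSq : Sq = AddSubgroup.closure {z : R | ∃ x y : R, z = x * y})
    (htf : ∀ z ∈ Sq, ∀ k : ℤ, k ≠ 0 → k • z = 0 → z = 0)
    (R0 : AddSubgroup R) (hR0le : R0 ≤ Ann)
    (hdisj : R0 ⊓ (Ann ⊓ Sq) = ⊥) (hsum : R0 ⊔ (Ann ⊓ Sq) = Ann) :
    ∀ x ∈ R0, ∀ m : ℕ, 0 < m → ∃ x' ∈ R0, m • x' = x := by
  intro x hx m hm
  obtain ⟨a, ha⟩ := hdiv x m hm
  have hmZ : (m : ℤ) ≠ 0 := by exact_mod_cast hm.ne'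
  have hmul : ∀ u v : R, u * v ∈ Sq := fun u v => by
    rw [hSq]; exact AddSubgroup.subset_closure ⟨u, v, rfl⟩
  have haAnn : a ∈ Ann := by
    rw [hAnn]
    intro y
    have hxA := (hAnn x).mp (hR0le hx)
    constructor
    · refine htf _ (hmul a y) m hmZ ?_
      have : (m : ℤ) • (a * y) = (m • a) * y := by
        rw [natCast_zsmul, smul_mul_assoc]
      rw [this, ha, (hxA y).1]
    · refine htf _ (hmul y a) m hmZ ?_
      have : (m : ℤ) • (y * a) = y * (m • a) := by
        rw [natCast_zsmul, mul_smul_comm]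
      rw [this, ha, (hxA y).2]
  rw [← hsum] at haAnn
  obtain ⟨r, hr, s, hs, hrs⟩ := AddSubgroup.mem_sup.mp haAnn
  have hms : m • s = 0 := by
    have h1 : m • s = x - m • r := by
      have : m • r + m • s = x := by rw [← smul_add, hrs, ha]
      linear_combination (norm := abel) this
    have h2 : m • s ∈ R0 ⊓ (Ann ⊓ Sq) := by
      constructor
      · rw [h1]; exact R0.sub_mem hx (R0.nsmul_mem hr m)
      · exact (Ann ⊓ Sq).nsmul_mem hs m
    rw [hdisj] at h2
    exact h2
  have hs0 : s = 0 := by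
    refine htf s hs.2 m hmZ ?_
    rw [natCast_zsmul, hms]
  refine ⟨r, hr, ?_⟩
  rw [← ha, ← hrs, hs0, add_zero]
end

section
/- In the free nilpotent-of-class-2 Lie ring over ℤ on generators s, t modulo the relations making u := (1/2)[s,t] an added generator — concretely, in the Lie ring R with underlying abelian group ℤs ⊕ ℤt ⊕ ℤu and bracket determined by [s,t] = 2u, [s,u] = [t,u] = 0 — the annihilator Ann(R) equals ℤu, the derived subring R² equals 2ℤu, and 2ℤu has no direct complement in ℤu; hence R admits no addition (no splitting of Ann(R) over Ann(R) ∩ R²). -/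
/-- In the Lie ring `R = ℤs ⊕ ℤt ⊕ ℤu` with `[s,t] = 2u`, `[s,u] = [t,u] = 0`:
the annihilator is `ℤu`, the derived subring is `2ℤu`, and `2ℤu` has no direct
complement in `ℤu`, so `R` admits no addition. -/
theorem stmt_15 :
    let R := ℤ × ℤ × ℤ
    let br : R → R → R := fun x y => (0, 0, 2 * (x.1 * y.2.1 - y.1 * x.2.1))
    let Sq := AddSubgroup.closure {z : R | ∃ x y : R, z = br x y}
    (∀ x : R, (∀ y : R, br x y = 0) ↔ (x.1 = 0 ∧ x.2.1 = 0)) ∧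
    (∀ w : R, w ∈ Sq ↔ (w.1 = 0 ∧ w.2.1 = 0 ∧ 2 ∣ w.2.2)) ∧
    ¬ ∃ C : AddSubgroup R,
        (∀ c ∈ C, ∀ y : R, br c y = 0) ∧
        C ⊓ Sq = ⊥ ∧
        (∀ w : R, (∀ y : R, br w y = 0) → ∃ c ∈ C, ∃ s ∈ Sq, w = c + s) := by
  intro R br Sq
  have hann : ∀ x : R, (∀ y : R, br x y = 0) ↔ (x.1 = 0 ∧ x.2.1 = 0) := by
    intro x
    constructor
    · intro h
      have h1 := congrArg (fun p : R => p.2.2) (h (0, 1, 0))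
      have h2 := congrArg (fun p : R => p.2.2) (h (1, 0, 0))
      simp [br] at h1 h2
      exact ⟨h1, h2⟩
    · rintro ⟨h1, h2⟩ y
      simp [br, Prod.ext_iff, h1, h2]
      rfl
  let S : AddSubgroup R :=
    { carrier := {w : R | w.1 = 0 ∧ w.2.1 = 0 ∧ 2 ∣ w.2.2}
      add_mem' := by
        rintro a b ⟨ha1, ha2, k, hk⟩ ⟨hb1, hb2, l, hl⟩
        refine ⟨?_, ?_, k + l, ?_⟩
        · show a.1 + b.1 = 0; rw [ha1, hb1, add_zero]
        · show a.2.1 + b.2.1 = 0; rw [ha2, hb2, add_zero]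
        · show a.2.2 + b.2.2 = 2 * (k + l); rw [hk, hl]; ring
      zero_mem' := ⟨rfl, rfl, dvd_zero 2⟩
      neg_mem' := by
        rintro a ⟨ha1, ha2, k, hk⟩
        refine ⟨?_, ?_, -k, ?_⟩
        · show -a.1 = 0; rw [ha1, neg_zero]
        · show -a.2.1 = 0; rw [ha2, neg_zero]
        · show -a.2.2 = 2 * (-k); rw [hk]; ring }
  have hSq : ∀ w : R, w ∈ Sq ↔ (w.1 = 0 ∧ w.2.1 = 0 ∧ 2 ∣ w.2.2) := by
    intro w
    constructor
    · intro hw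
      have hle : Sq ≤ S := by
        apply (AddSubgroup.closure_le _).2
        rintro z ⟨x, y, rfl⟩
        exact ⟨rfl, rfl, ⟨x.1 * y.2.1 - y.1 * x.2.1, rfl⟩⟩
      exact hle hw
    · rintro ⟨h1, h2, k, hk⟩
      apply AddSubgroup.subset_closure
      refine ⟨(k, 0, 0), (0, 1, 0), ?_⟩
      obtain ⟨a, b, c⟩ := w
      simp only [br]
      simp at h1 h2 hk
      simp [h1, h2, hk, Prod.ext_iff]
  refine ⟨hann, hSq, ?_⟩
  rintro ⟨C, hC, hinf, hcomp⟩
  obtain ⟨c, hc, s, hs, heq⟩ := hcomp (0, 0, 1) (by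
    intro y
    simp [br, Prod.ext_iff]
    rfl)
  obtain ⟨hs1, hs2, k, hk⟩ := (hSq s).1 hs
  have e1 : (0 : ℤ) = c.1 + s.1 := congrArg (fun p : R => p.1) heq
  have e2 : (0 : ℤ) = c.2.1 + s.2.1 := congrArg (fun p : R => p.2.1) heq
  have e3 : (1 : ℤ) = c.2.2 + s.2.2 := congrArg (fun p : R => p.2.2) heq
  have hcc : c + c ∈ C ⊓ Sq := by
    refine ⟨add_mem hc hc, (hSq _).2 ⟨?_, ?_, c.2.2, ?_⟩⟩
    · show c.1 + c.1 = 0; omega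
    · show c.2.1 + c.2.1 = 0; omega
    · show c.2.2 + c.2.2 = 2 * c.2.2; ring
  rw [hinf] at hcc
  have hz2 : c.2.2 + c.2.2 = 0 :=
    congrArg (fun p : R => p.2.2) (AddSubgroup.mem_bot.1 hcc)
  omega
end

section
/- In a torsion-free nilpotent group, n-th roots are unique: if G is nilpotent and torsion-free and xⁿ = yⁿ for some positive integer n and x, y ∈ G, then x = y. -/
open scoped commutatorElement

private lemma aux_root {G : Type*} [Group G]
    (htf : ∀ g : G, ∀ n : ℕ, 0 < n → g ^ n = 1 → g = 1)
    (n : ℕ) (hn : 0 < n) :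
    ∀ j k : ℕ, (⊤ : Subgroup G).lowerCentralSeries (k + j) = ⊥ →
      ∀ y d : G, d ∈ (⊤ : Subgroup G).lowerCentralSeries k → (y * d) ^ n = y ^ n → d = 1 := by
  intro j
  induction j with
  | zero =>
    intro k hK y d hd _
    rw [Nat.add_zero] at hK
    rw [hK] at hd
    exact hd
  | succ j ih =>
    intro k hK y d hd h
    -- `d` commutes with `y ^ n`
    have hdc : Commute d (y ^ n) := by
      have h1 : Commute (y * d) (y ^ n) := by
        rw [← h]; exact (Commute.self_pow _ _)
      have h2 : Commute y⁻¹ (y ^ n) := (Commute.self_pow y n).inv_left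
      have h3 : Commute (y⁻¹ * (y * d)) (y ^ n) := h2.mul_left h1
      rwa [inv_mul_cancel_left] at h3
    -- the commutator w lies one step deeper in the lower central series
    have hwmem : (⁅d⁻¹, y⁻¹⁆ : G)⁻¹ ∈ (⊤ : Subgroup G).lowerCentralSeries (k + 1) :=
      inv_mem (Subgroup.commutator_mem_commutator (inv_mem hd) (Subgroup.mem_top _))
    have hyw : y * (⁅d⁻¹, y⁻¹⁆ : G)⁻¹ = d⁻¹ * y * d := by
      rw [commutatorElement_def]; group
    have hpow : (y * (⁅d⁻¹, y⁻¹⁆ : G)⁻¹) ^ n = y ^ n := by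
      rw [hyw]
      have hc : (d⁻¹ * y * d⁻¹⁻¹) ^ n = d⁻¹ * y ^ n * d⁻¹⁻¹ := conj_pow
      rw [inv_inv] at hc
      rw [hc, hdc.inv_left.eq, mul_assoc, inv_mul_cancel, mul_one]
    have hK' : (⊤ : Subgroup G).lowerCentralSeries ((k + 1) + j) = ⊥ := by
      have he : k + 1 + j = k + (j + 1) := by omega
      rw [he]; exact hK
    have hw1 : (⁅d⁻¹, y⁻¹⁆ : G)⁻¹ = 1 := ih (k + 1) hK' y _ hwmem hpow
    have hcomm : Commute y d := by
      rw [inv_eq_one, commutatorElement_eq_one_iff_commute] at hw1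
      simpa using hw1.inv_left.inv_right.symm
    have hdn : d ^ n = 1 := by
      have := hcomm.mul_pow n
      rw [h] at this
      exact (left_eq_mul.mp this).symm ▸ rfl
    exact htf d n hn hdn

/-- In a torsion-free nilpotent group, `n`-th roots are unique. -/
theorem stmt_16 {G : Type*} [Group G] (hnil : Group.IsNilpotent G)
    (htf : ∀ g : G, ∀ n : ℕ, 0 < n → g ^ n = 1 → g = 1)
    (x y : G) (n : ℕ) (hn : 0 < n) (h : x ^ n = y ^ n) : x = y := by
  obtain ⟨K, hK⟩ := nilpotent_iff_lowerCentralSeries.mp hnil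
  have hd : y⁻¹ * x = 1 := by
    refine aux_root htf n hn K 0 (by simpa using hK) y (y⁻¹ * x)
      (Subgroup.mem_top _) ?_
    rw [mul_inv_cancel_left, h]
  rw [inv_mul_eq_one] at hd
  exact hd.symm
end
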